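/- Let m ≥ 2 and let A be a real m×m matrix with a_{ij} ≥ 0 for all i ≠ j and zero row sums, let ε > 0, and let Ã be the matrix obtained from A by replacing a_{11} with a_{11} − ε. Suppose λ ∈ ℝ and v ∈ ℝᵐ satisfy Ãv = λv, v₁ > 0, and |v_j| ≤ v₁ for all j = 1, …, m. Then λ ≤ −ε; in particular λ < 0. -/
import Mathlib


open Matrix BigOperators

/-- If `λ` is an eigenvalue of the pinned matrix `Ã` with a real eigenvector whose
first component is positive and maximal in absolute value, then `λ ≤ -ε < 0`. -/
theorem stmt_1 (m : ℕ) (hm : 2 ≤ m) (A : Matrix (Fin m) (Fin m) ℝ)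
    (hoff : ∀ i j : Fin m, i ≠ j → 0 ≤ A i j)
    (hrow : ∀ i : Fin m, ∑ j, A i j = 0)
    (ε : ℝ) (hε : 0 < ε)
    (Atil : Matrix (Fin m) (Fin m) ℝ)
    (hAtil : ∀ i j : Fin m, Atil i j =
      if i = (⟨0, by omega⟩ : Fin m) ∧ j = (⟨0, by omega⟩ : Fin m) then A i j - ε else A i j)
    (lam : ℝ) (v : Fin m → ℝ)
    (heig : Atil *ᵥ v = lam • v)
    (hv1 : 0 < v ⟨0, by omega⟩)
    (hmax : ∀ j : Fin m, |v j| ≤ v ⟨0, by omega⟩) :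
    lam ≤ -ε ∧ lam < 0 := by
  set i0 : Fin m := ⟨0, by omega⟩ with hi0
  have h := congrFun heig i0
  rw [mulVec, dotProduct] at h
  have hsplit : ∑ j, Atil i0 j * v j
      = Atil i0 i0 * v i0 + ∑ j ∈ Finset.univ.erase i0, Atil i0 j * v j := by
    exact (Finset.add_sum_erase Finset.univ (fun j => Atil i0 j * v j) (Finset.mem_univ i0)).symm
  have hA00 : Atil i0 i0 = A i0 i0 - ε := by rw [hAtil]; simp
  have hrest : ∀ j ∈ Finset.univ.erase i0, Atil i0 j = A i0 j := by
    intro j hj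
    rw [hAtil]
    simp only [Finset.mem_erase] at hj
    simp [hj.1]
  have hbound : ∑ j ∈ Finset.univ.erase i0, Atil i0 j * v j
      ≤ ∑ j ∈ Finset.univ.erase i0, A i0 j * v i0 := by
    apply Finset.sum_le_sum
    intro j hj
    rw [hrest j hj]
    have hj' : j ≠ i0 := (Finset.mem_erase.mp hj).1
    have hAij : 0 ≤ A i0 j := hoff i0 j (Ne.symm hj')
    have : v j ≤ v i0 := le_trans (le_abs_self _) (hmax j)
    nlinarith
  have hsum : ∑ j ∈ Finset.univ.erase i0, A i0 j = - A i0 i0 := by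
    have := hrow i0
    rw [← Finset.add_sum_erase _ _ (Finset.mem_univ i0)] at this
    linarith
  have hkey : lam * v i0 ≤ -ε * v i0 := by
    have h1 : lam * v i0 = Atil i0 i0 * v i0 + ∑ j ∈ Finset.univ.erase i0, Atil i0 j * v j := by
      rw [← hsplit, h]; simp [mul_comm]
    rw [← Finset.sum_mul] at hbound
    rw [hsum] at hbound
    rw [h1, hA00]
    nlinarith
  have hle : lam ≤ -ε := le_of_mul_le_mul_right (by linarith [hkey]) hv1
  exact ⟨hle, lt_of_le_of_lt hle (by linarith)⟩
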